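/- Let P be a probabilistic term rewrite system and T a P-rewrite-sequence-tree of positive height with root term t such that every leaf term t_v is an instance C_v[tσ_v] of t inside some context. Then P is neither almost-surely terminating nor positively almost-surely terminating. -/

import Mathlib

/-- First-order terms over a signature `S` with variables `V`. -/
inductive Tm (S V : Type) : Type
  | var : V → Tm S V
  | app : S → List (Tm S V) → Tm S V

namespace Tm
variable {S V : Type}

/-- Applying a substitution `σ : V → Tm S V` homomorphically to a term. -/
def subst (σ : V → Tm S V) : Tm S V → Tm S V
  | var x => σ x
  | app f ts => app f (ts.attach.map fun u => subst σ u.1)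
decreasing_by
  have := List.sizeOf_lt_of_mem u.2
  simp only [Tm.app.sizeOf_spec]
  omega

/-- The variable `x` occurs in the term `t`. -/
inductive Occurs (x : V) : Tm S V → Prop
  | var : Occurs x (var x)
  | app {f : S} {ts : List (Tm S V)} {t : Tm S V} :
      t ∈ ts → Occurs x t → Occurs x (app f ts)

/-- `iter σ n t` is `t σⁿ`, the `n`-fold application of `σ` to `t`. -/
def iter (σ : V → Tm S V) (n : ℕ) (t : Tm S V) : Tm S V :=
  (subst σ)^[n] t

end Tm

namespace Tm
variable {S V : Type}

/-- The subterm of `t` at position `π`, if `π` is a position of `t`. -/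
def subtermAt : Tm S V → List ℕ → Option (Tm S V)
  | t, [] => some t
  | var _, _ :: _ => none
  | app _ [], _ :: _ => none
  | app _ (u :: _), 0 :: π => subtermAt u π
  | app f (_ :: ts), (i + 1) :: π => subtermAt (app f ts) (i :: π)

/-- `t` matches `s` at position `π`, i.e. `s = C[tσ]` with the hole of `C` at `π`. -/
def Matches (t s : Tm S V) (π : List ℕ) : Prop :=
  ∃ σ : V → Tm S V, subtermAt s π = some (subst σ t)

end Tm

open scoped ENNReal

/-- Nodes of a finitely-branching tree given by a branching function `nc`:
the node `v` (a position, i.e. list of child indices) is a node iff it is the root `[]`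
or `v = w ++ [i]` for a node `w` with `i < nc w`. -/
inductive IsNodeOf (nc : List ℕ → ℕ) : List ℕ → Prop
  | root : IsNodeOf nc []
  | child {v : List ℕ} {i : ℕ} : IsNodeOf nc v → i < nc v → IsNodeOf nc (v ++ [i])

/-- A (possibly infinite) rewrite sequence tree: every node `v` carries a probability
`prob v ∈ (0,1]` and an object `label v`; the root has probability `1`, and for every
inner node the probabilities of its children sum up to the probability of the node. -/
structure RST (A : Type) where
  nc : List ℕ → ℕ
  prob : List ℕ → ℝ≥0∞
  label : List ℕ → A
  prob_root : prob [] = 1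
  prob_pos : ∀ v, IsNodeOf nc v → 0 < prob v
  prob_le_one : ∀ v, IsNodeOf nc v → prob v ≤ 1
  prob_sum : ∀ v, IsNodeOf nc v → 0 < nc v →
      ∑ i ∈ Finset.range (nc v), prob (v ++ [i]) = prob v

namespace RST
variable {A : Type}

def IsNode (T : RST A) (v : List ℕ) : Prop := IsNodeOf T.nc v

def IsLeaf (T : RST A) (v : List ℕ) : Prop := T.IsNode v ∧ T.nc v = 0

/-- The termination probability `|T|`: the sum of the probabilities of all leaves. -/
noncomputable def termProb (T : RST A) : ℝ≥0∞ :=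
  ∑' v : {v : List ℕ // T.IsLeaf v}, T.prob v

/-- The expected derivation length `edl(T)`: `∞` if `|T| < 1`, and otherwise the sum
over all leaves `v` of `depth(v) · prob v` (the depth of a node is its list length). -/
noncomputable def edl (T : RST A) : ℝ≥0∞ :=
  if T.termProb < 1 then ⊤
  else ∑' v : {v : List ℕ // T.IsLeaf v}, (v.1.length : ℝ≥0∞) * T.prob v

end RST
variable {S V : Type}

/-- A probabilistic rewrite rule: a left-hand side which is not a variable, and a
finite multi-distribution of right-hand sides whose variables occur in the left-hand
side and whose probabilities are positive and sum to `1`. -/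
structure Rule (S V : Type) where
  lhs : Tm S V
  rhs : List (ℝ≥0∞ × Tm S V)
  lhs_not_var : ∀ x : V, lhs ≠ Tm.var x
  rhs_vars : ∀ pr ∈ rhs, ∀ x : V, Tm.Occurs x pr.2 → Tm.Occurs x lhs
  rhs_prob_pos : ∀ pr ∈ rhs, 0 < pr.1
  rhs_prob_sum : (rhs.map Prod.fst).sum = 1

/-- A probabilistic term rewrite system (PTRS): a finite set of probabilistic rules. -/
abbrev PTRS (S V : Type) := List (Rule S V)

/-- The probabilistic rewrite relation induced by a PTRS: `Rew P s l` means that `s`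
rewrites via `P` to the multi-distribution `l` (a rule applied with a matching
substitution at some position, i.e. under some context). -/
inductive Rew (P : PTRS S V) : Tm S V → List (ℝ≥0∞ × Tm S V) → Prop
  | rule {r : Rule S V} (σ : V → Tm S V) : r ∈ P →
      Rew P (Tm.subst σ r.lhs) (r.rhs.map fun pr => (pr.1, Tm.subst σ pr.2))
  | ctx {f : S} {ts₁ ts₂ : List (Tm S V)} {u : Tm S V} {l : List (ℝ≥0∞ × Tm S V)} :
      Rew P u l →
      Rew P (Tm.app f (ts₁ ++ u :: ts₂))
        (l.map fun pr => (pr.1, Tm.app f (ts₁ ++ pr.2 :: ts₂)))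

/-- `T` is a `P`-rewrite-sequence-tree: the edges of every inner node correspond to a
`P`-rewrite step of its term, the children carrying the respective probabilities. -/
def IsPRST (P : PTRS S V) (T : RST (Tm S V)) : Prop :=
  ∀ v, T.IsNode v → 0 < T.nc v →
    ∃ l : List (ℝ≥0∞ × Tm S V), Rew P (T.label v) l ∧ l.length = T.nc v ∧
      ∀ i < T.nc v,
        l[i]? = some (T.prob (v ++ [i]) / T.prob v, T.label (v ++ [i]))

/-- `P` is almost-surely terminating: every `P`-RST has termination probability `1`. -/
def AST (P : PTRS S V) : Prop :=
  ∀ T : RST (Tm S V), IsPRST P T → T.termProb = 1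

/-- `P` is positively almost-surely terminating: every `P`-RST has finite expected
derivation length. -/
def PAST (P : PTRS S V) : Prop :=
  ∀ T : RST (Tm S V), IsPRST P T → T.edl < ⊤
namespace Tm
variable {S V : Type}

theorem subst_app (σ : V → Tm S V) (f : S) (ts : List (Tm S V)) :
    subst σ (app f ts) = app f (ts.map (subst σ)) := by
  rw [subst]
  simp [List.attach_map_val]

theorem subst_subst (τ σ : V → Tm S V) : ∀ t : Tm S V,
    subst τ (subst σ t) = subst (fun x => subst τ (σ x)) t
  | var x => by simp [subst]
  | app f ts => by
      rw [subst_app, subst_app, subst_app, List.map_map]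
      congr 1
      refine List.map_congr_left fun u hu => ?_
      have := List.sizeOf_lt_of_mem hu
      exact subst_subst τ σ u
decreasing_by
  simp only [Tm.app.sizeOf_spec]; omega

/-- Replace the subterm at position `π` (junk if not a position). -/
def replace : Tm S V → List ℕ → Tm S V → Tm S V
  | _, [], u => u
  | var x, _ :: _, _ => var x
  | app f ts, i :: π, u =>
      if h : i < ts.length then app f (ts.take i ++ replace ts[i] π u :: ts.drop (i+1))
      else app f ts
decreasing_by
  have := List.sizeOf_lt_of_mem (List.getElem_mem h)
  simp only [Tm.app.sizeOf_spec]; omega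

theorem subtermAt_app {w : Tm S V} {π : List ℕ} {f : S} :
    ∀ (ts : List (Tm S V)) (i : ℕ), subtermAt (Tm.app f ts) (i :: π) = some w →
      ∃ h : i < ts.length, subtermAt ts[i] π = some w
  | [], i => by intro h; simp [subtermAt] at h
  | t :: ts, 0 => fun h => ⟨by simp, by rw [subtermAt] at h; simpa using h⟩
  | t :: ts, i + 1 => by
      intro h
      rw [subtermAt] at h
      obtain ⟨h1, h2⟩ := subtermAt_app ts i h
      exact ⟨by simpa using Nat.succ_lt_succ h1, by simpa using h2⟩

theorem replace_self : ∀ (π : List ℕ) (s w : Tm S V), subtermAt s π = some w →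
    replace s π w = s
  | [], s, w => by intro h; rw [subtermAt] at h; rw [replace]; simpa using h.symm
  | i :: π, var x, w => by intro h; rw [subtermAt] at h; simp at h
  | i :: π, app f ts, w => by
      intro h
      obtain ⟨h1, h2⟩ := subtermAt_app ts i h
      rw [replace, dif_pos h1, replace_self π ts[i] w h2]
      congr 1
      rw [List.getElem_cons_drop, List.take_append_drop]
end Tm

theorem rew_subst {P : PTRS S V} {s : Tm S V} {l : List (ℝ≥0∞ × Tm S V)}
    (τ : V → Tm S V) (h : Rew P s l) :
    Rew P (Tm.subst τ s) (l.map fun pr => (pr.1, Tm.subst τ pr.2)) := by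
  induction h with
  | @rule r σ hr =>
      have h2 := Rew.rule (P := P) (fun x => Tm.subst τ (σ x)) hr
      simp only [← Tm.subst_subst] at h2
      simpa [List.map_map, Function.comp_def] using h2
  | @ctx f ts₁ ts₂ u l' hh ih =>
      rw [Tm.subst_app]
      simp only [List.map_append, List.map_cons]
      have h2 := Rew.ctx (f := f) (ts₁ := ts₁.map (Tm.subst τ))
        (ts₂ := ts₂.map (Tm.subst τ)) ih
      simp only [List.map_map] at h2 ⊢
      convert h2 using 2
      funext pr
      simp [Function.comp, Tm.subst_app]

theorem rew_replace {P : PTRS S V} : ∀ (π : List ℕ) (s w : Tm S V),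
    Tm.subtermAt s π = some w → ∀ (u : Tm S V) (l : List (ℝ≥0∞ × Tm S V)), Rew P u l →
    Rew P (Tm.replace s π u) (l.map fun pr => (pr.1, Tm.replace s π pr.2))
  | [], s, w => by
      intro _ u l hl
      rw [Tm.replace]
      simpa [Tm.replace] using hl
  | i :: π, Tm.var x, w => by intro h; rw [Tm.subtermAt] at h; simp at h
  | i :: π, Tm.app f ts, w => by
      intro h u l hl
      obtain ⟨h1, h2⟩ := Tm.subtermAt_app ts i h
      have ih := rew_replace π ts[i] w h2 u l hl
      have h3 := Rew.ctx (f := f) (ts₁ := ts.take i) (ts₂ := ts.drop (i+1)) ih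
      have heq : ∀ z : Tm S V,
          Tm.replace (Tm.app f ts) (i :: π) z
            = Tm.app f (ts.take i ++ Tm.replace ts[i] π z :: ts.drop (i+1)) := by
        intro z; rw [Tm.replace, dif_pos h1]
      rw [heq]
      simpa [List.map_map, Function.comp_def, heq] using h3
section Glue
variable {S V : Type} (P : PTRS S V) (T : RST (Tm S V))
  (D : List ℕ → (List ℕ × (V → Tm S V)))

/-- `F` commutes with rewriting. -/
def Good (P : PTRS S V) (F : Tm S V → Tm S V) : Prop :=
  ∀ s l, Rew P s l → Rew P (F s) (l.map fun pr => (pr.1, F pr.2))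

theorem good_id : Good P (fun s => s) := by
  intro s l h; simpa using h

theorem good_comp {F G : Tm S V → Tm S V} (hF : Good P F) (hG : Good P G) :
    Good P (fun s => F (G s)) := by
  intro s l h
  simpa [List.map_map, Function.comp_def] using hF _ _ (hG s l h)

/-- The transformation attached to the leaf `w`. -/
def Fleaf (w : List ℕ) (s : Tm S V) : Tm S V :=
  Tm.replace (T.label w) (D w).1 (Tm.subst (D w).2 s)

theorem good_Fleaf {w : List ℕ}
    (hw : Tm.subtermAt (T.label w) (D w).1
        = some (Tm.subst (D w).2 (T.label []))) :
    Good P (Fleaf T D w) := by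
  intro s l h
  have h1 := rew_subst (D w).2 h
  have h2 := rew_replace (D w).1 (T.label w) _ hw _ _ h1
  simpa [Fleaf, List.map_map, Function.comp_def] using h2

abbrev GSt (S V : Type) := ℝ≥0∞ × (Tm S V → Tm S V) × List ℕ

/-- Normalise a state: if the residual position is a leaf of `T`, start a new copy. -/
noncomputable def gnorm (s : GSt S V) : GSt S V :=
  if T.nc s.2.2 = 0 then (s.1 * T.prob s.2.2, fun t => s.2.1 (Fleaf T D s.2.2 t), [])
  else s

noncomputable def gstep (i : ℕ) (s : GSt S V) : GSt S V :=
  ((gnorm T D s).1, (gnorm T D s).2.1, (gnorm T D s).2.2 ++ [i])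

noncomputable def ggo : GSt S V → List ℕ → GSt S V
  | s, [] => s
  | s, i :: v => ggo (gstep T D i s) v

noncomputable def nst (v : List ℕ) : GSt S V :=
  gnorm T D (ggo T D (1, fun t => t, []) v)

theorem ggo_snoc : ∀ (v : List ℕ) (i : ℕ) (s : GSt S V),
    ggo T D s (v ++ [i]) = gstep T D i (ggo T D s v)
  | [], i, s => by simp [ggo]
  | j :: v, i, s => by
      rw [List.cons_append]
      show ggo T D (gstep T D j s) (v ++ [i]) = gstep T D i (ggo T D (gstep T D j s) v)
      exact ggo_snoc v i (gstep T D j s)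

theorem nst_snoc (v : List ℕ) (i : ℕ) :
    nst T D (v ++ [i]) = gnorm T D ((nst T D v).1, (nst T D v).2.1, (nst T D v).2.2 ++ [i]) := by
  unfold nst
  rw [ggo_snoc]
  rfl

/-- Invariant on states reachable at nodes of the glued tree. -/
def GInv (s : GSt S V) : Prop :=
  0 < s.1 ∧ s.1 ≤ 1 ∧ IsNodeOf T.nc s.2.2 ∧ 0 < T.nc s.2.2 ∧ Good P s.2.1

theorem nst_root (hh : 0 < T.nc []) : nst T D [] = (1, fun t => t, []) := by
  unfold nst ggo gnorm
  simp [hh.ne']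

theorem inv_root (hh : 0 < T.nc []) : GInv P T (nst T D []) := by
  rw [nst_root T D hh]
  exact ⟨one_pos, le_refl 1, IsNodeOf.root, hh, good_id P⟩

theorem inv_child (hh : 0 < T.nc [])
    (hD : ∀ w, T.IsLeaf w → Tm.subtermAt (T.label w) (D w).1
        = some (Tm.subst (D w).2 (T.label [])))
    {v : List ℕ} {i : ℕ} (hv : GInv P T (nst T D v))
    (hi : i < T.nc (nst T D v).2.2) :
    GInv P T (nst T D (v ++ [i])) ∧
    (nst T D (v ++ [i])).1 * T.prob (nst T D (v ++ [i])).2.2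
      = (nst T D v).1 * T.prob ((nst T D v).2.2 ++ [i]) ∧
    (nst T D (v ++ [i])).2.1 (T.label (nst T D (v ++ [i])).2.2)
      = (nst T D v).2.1 (T.label ((nst T D v).2.2 ++ [i])) := by
  obtain ⟨hp0, hp1, hnode, hnc, hF⟩ := hv
  have hnode' : IsNodeOf T.nc ((nst T D v).2.2 ++ [i]) := IsNodeOf.child hnode hi
  have hq0 : 0 < T.prob ((nst T D v).2.2 ++ [i]) := T.prob_pos _ hnode'
  have hq1 : T.prob ((nst T D v).2.2 ++ [i]) ≤ 1 := T.prob_le_one _ hnode'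
  rw [nst_snoc]
  by_cases hleaf : T.nc ((nst T D v).2.2 ++ [i]) = 0
  · have hL : T.IsLeaf ((nst T D v).2.2 ++ [i]) := ⟨hnode', hleaf⟩
    rw [gnorm, if_pos hleaf]
    refine ⟨⟨?_, ?_, ?_, ?_, ?_⟩, ?_, ?_⟩
    · exact ENNReal.mul_pos hp0.ne' hq0.ne'
    · exact mul_le_one' hp1 hq1
    · exact IsNodeOf.root
    · exact hh
    · show Good P (fun t => (nst T D v).2.1 (Fleaf T D ((nst T D v).2.2 ++ [i]) t))
      exact good_comp P hF (good_Fleaf P T D (hD _ hL))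
    · show (nst T D v).1 * T.prob ((nst T D v).2.2 ++ [i]) * T.prob []
          = (nst T D v).1 * T.prob ((nst T D v).2.2 ++ [i])
      rw [T.prob_root, mul_one]
    · exact congrArg (nst T D v).2.1 (Tm.replace_self _ _ _ (hD _ hL))
  · rw [gnorm, if_neg hleaf]
    exact ⟨⟨hp0, hp1, hnode', Nat.pos_of_ne_zero hleaf, hF⟩, rfl, rfl⟩

theorem inv_node (hh : 0 < T.nc [])
    (hD : ∀ w, T.IsLeaf w → Tm.subtermAt (T.label w) (D w).1
        = some (Tm.subst (D w).2 (T.label []))) :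
    ∀ v : List ℕ,
    IsNodeOf (fun v => T.nc (nst T D v).2.2) v → GInv P T (nst T D v) := by
  intro v hv
  induction hv with
  | root => exact inv_root P T D hh
  | child hw hi ih => exact (inv_child P T D hh hD ih hi).1

/-- The glued, leafless RST. -/
noncomputable def glue (hh : 0 < T.nc [])
    (hD : ∀ w, T.IsLeaf w → Tm.subtermAt (T.label w) (D w).1
        = some (Tm.subst (D w).2 (T.label []))) : RST (Tm S V) where
  nc v := T.nc (nst T D v).2.2
  prob v := (nst T D v).1 * T.prob (nst T D v).2.2
  label v := (nst T D v).2.1 (T.label (nst T D v).2.2)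
  prob_root := by
    show (nst T D []).1 * T.prob (nst T D []).2.2 = 1
    rw [nst_root T D hh]; simp [T.prob_root]
  prob_pos := by
    intro v hv
    obtain ⟨hp0, _, hnode, _, _⟩ := inv_node P T D hh hD v hv
    exact ENNReal.mul_pos hp0.ne' (T.prob_pos _ hnode).ne'
  prob_le_one := by
    intro v hv
    obtain ⟨_, hp1, hnode, _, _⟩ := inv_node P T D hh hD v hv
    exact mul_le_one' hp1 (T.prob_le_one _ hnode)
  prob_sum := by
    intro v hv hpos
    obtain ⟨hp0, hp1, hnode, hnc, hF⟩ := inv_node P T D hh hD v hv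
    calc ∑ i ∈ Finset.range (T.nc (nst T D v).2.2),
          (nst T D (v ++ [i])).1 * T.prob (nst T D (v ++ [i])).2.2
        = ∑ i ∈ Finset.range (T.nc (nst T D v).2.2),
          (nst T D v).1 * T.prob ((nst T D v).2.2 ++ [i]) := by
          refine Finset.sum_congr rfl fun i hi => ?_
          exact (inv_child P T D hh hD (inv_node P T D hh hD v hv)
            (Finset.mem_range.mp hi)).2.1
      _ = (nst T D v).1 * T.prob (nst T D v).2.2 := by
          rw [← Finset.mul_sum, T.prob_sum _ hnode hnc]

theorem glue_no_leaf (hh : 0 < T.nc [])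
    (hD : ∀ w, T.IsLeaf w → Tm.subtermAt (T.label w) (D w).1
        = some (Tm.subst (D w).2 (T.label []))) :
    ∀ v, ¬ (glue P T D hh hD).IsLeaf v := by
  intro v hv
  obtain ⟨_, _, _, hnc, _⟩ := inv_node P T D hh hD v hv.1
  exact hnc.ne' hv.2

theorem glue_isPRST (hh : 0 < T.nc [])
    (hD : ∀ w, T.IsLeaf w → Tm.subtermAt (T.label w) (D w).1
        = some (Tm.subst (D w).2 (T.label [])))
    (hT : IsPRST P T) : IsPRST P (glue P T D hh hD) := by
  intro v hv hpos
  have hinv := inv_node P T D hh hD v hv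
  obtain ⟨hp0, hp1, hnode, hnc, hF⟩ := hinv
  obtain ⟨l, hrew, hlen, hget⟩ := hT _ hnode hpos
  refine ⟨l.map fun pr => (pr.1, (nst T D v).2.1 pr.2), ?_, by rw [List.length_map]; exact hlen, ?_⟩
  · exact hF _ _ hrew
  intro i hi
  have hchild := inv_child P T D hh hD (inv_node P T D hh hD v hv) hi
  have hg := hget i hi
  show (l.map fun pr => (pr.1, (nst T D v).2.1 pr.2))[i]?
      = some ((nst T D (v ++ [i])).1 * T.prob (nst T D (v ++ [i])).2.2
          / ((nst T D v).1 * T.prob (nst T D v).2.2),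
        (nst T D (v ++ [i])).2.1 (T.label (nst T D (v ++ [i])).2.2))
  rw [List.getElem?_map, hg, Option.map_some, hchild.2.1, hchild.2.2,
    ENNReal.mul_div_mul_left _ _ hp0.ne' (hp1.trans_lt ENNReal.one_lt_top).ne]

end Glue

/-- If `T` is a `P`-RST of positive height with root term `t` such that every leaf term
is of the form `C[tσ]` (an instance of `t` inside some context), then `P` is neither
almost-surely terminating nor positively almost-surely terminating. -/
theorem not_AST_not_PAST_of_looping_RST {S V : Type} (P : PTRS S V)
    (T : RST (Tm S V)) (hT : IsPRST P T) (hheight : 0 < T.nc [])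
    (hloop : ∀ v, T.IsLeaf v →
      ∃ π : List ℕ, Tm.Matches (T.label []) (T.label v) π) :
    ¬ AST P ∧ ¬ PAST P := by
  classical
  set D : List ℕ → (List ℕ × (V → Tm S V)) := fun w =>
    if h : T.IsLeaf w then ((hloop w h).choose, (hloop w h).choose_spec.choose)
    else ([], fun x => Tm.var x) with hDdef
  have hD : ∀ w, T.IsLeaf w → Tm.subtermAt (T.label w) (D w).1
      = some (Tm.subst (D w).2 (T.label [])) := by
    intro w hw
    simp only [hDdef, dif_pos hw]
    exact (hloop w hw).choose_spec.choose_spec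
  set T' := glue P T D hheight hD with hT'
  have hPRST : IsPRST P T' := glue_isPRST P T D hheight hD hT
  haveI : IsEmpty {v : List ℕ // T'.IsLeaf v} :=
    ⟨fun x => glue_no_leaf P T D hheight hD x.1 x.2⟩
  have h0 : T'.termProb = 0 := by rw [RST.termProb]; exact tsum_empty
  constructor
  · intro hA
    have := hA T' hPRST
    rw [h0] at this
    exact zero_ne_one this
  · intro hP
    have := hP T' hPRST
    rw [RST.edl, if_pos (by rw [h0]; exact zero_lt_one)] at this
    exact lt_irrefl _ this
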